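/- Let L be a finite lattice. Then every interval of L is atomic if and only if every interval of L is coatomic. Here 'every interval is atomic' means: for all a ≤ b in L and every p with a ≤ p ≤ b, p = a ⊔ sSup {x : a ⋖ x and x ≤ p}; and 'every interval is coatomic' means: for all a ≤ b and a ≤ p ≤ b, p = b ⊓ sInf {y : y ⋖ b and p ≤ y}. -/

import Mathlib

lemma aux_atomic_to_coatomic {L : Type*} [CompleteLattice L] [Fintype L]
    (hA : ∀ a b p : L, a ≤ b → a ≤ p → p ≤ b →
        p = a ⊔ sSup {x : L | a ⋖ x ∧ x ≤ p}) :
    ∀ a b p : L, a ≤ b → a ≤ p → p ≤ b →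
        p = b ⊓ sInf {y : L | y ⋖ b ∧ p ≤ y} := by
  intro a b p _ _ hpb
  set S : Set L := {y : L | y ⋖ b ∧ p ≤ y} with hS
  have hpm : p ≤ b ⊓ sInf S := le_inf hpb (le_sInf fun y hy => hy.2)
  refine le_antisymm hpm ?_
  by_contra hcon
  set m := b ⊓ sInf S with hm
  have hpm' : p < m := lt_of_le_of_ne hpm (fun e => hcon (e ▸ le_refl _))
  have hmb : m ≤ b := inf_le_left
  have hmain := hA p b m hpb hpm'.le hmb
  set T : Set L := {x : L | p ⋖ x ∧ x ≤ m} with hT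
  have hTne : T.Nonempty := by
    rcases Set.eq_empty_or_nonempty T with he | hne
    · rw [he, sSup_empty, sup_bot_eq] at hmain
      exact absurd hmain.symm hpm'.ne
    · exact hne
  obtain ⟨x, hx⟩ := hTne
  -- x is an atom of [p, b] below all coatoms of [p, b]
  have hxm : x ≤ m := hx.2
  set U : Set L := {y : L | p ≤ y ∧ y ≤ b ∧ ¬ x ≤ y} with hU
  have hUne : U.Nonempty := ⟨p, le_rfl, hpb, fun h => (hx.1.lt.not_ge h)⟩
  obtain ⟨y, hyU, hymax'⟩ := (Set.toFinite U).exists_maximal hUne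
  have hymax : ∀ z ∈ U, id y ≤ id z → id y = id z := fun z hz h => le_antisymm h (hymax' hz h)
  have key : ∀ z, y < z → z ≤ b → x ≤ z := by
    intro z hyz hzb
    by_contra hxz
    have hzU : z ∈ U := ⟨hyU.1.trans hyz.le, hzb, hxz⟩
    exact hyz.ne (hymax z hzU hyz.le)
  have hyb : y < b := lt_of_le_of_ne hyU.2.1 (by
    rintro rfl
    exact hyU.2.2 (hxm.trans hmb))
  have hb : b ≤ y ⊔ x := by
    have h2 := hA y b b hyU.2.1 hyU.2.1 le_rfl
    conv_lhs => rw [h2]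
    refine sup_le le_sup_left (sSup_le ?_)
    rintro u ⟨huc, hub⟩
    have hxu : x ≤ u := key u huc.lt hub
    have : y ⊔ x ≤ u := sup_le huc.lt.le hxu
    have hlt : y < y ⊔ x := lt_of_le_of_ne le_sup_left (by
      intro e
      exact hyU.2.2 (e ▸ le_sup_right))
    -- y ⋖ u, y < y ⊔ x ≤ u forces u = y ⊔ x
    rcases eq_or_lt_of_le this with he | hlt2
    · exact he.ge
    · exact absurd hlt2 (huc.2 hlt)
  have hcov : y ⋖ b := by
    refine ⟨hyb, fun z hz1 hz2 => ?_⟩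
    exact hz2.not_ge (hb.trans (sup_le hz1.le (key z hz1 hz2.le)))
  have : x ≤ y := (hxm.trans inf_le_right).trans (sInf_le ⟨hcov, hyU.1⟩)
  exact hyU.2.2 this

theorem intervals_atomic_iff_intervals_coatomic
    {L : Type*} [CompleteLattice L] [Fintype L] :
    (∀ a b p : L, a ≤ b → a ≤ p → p ≤ b →
        p = a ⊔ sSup {x : L | a ⋖ x ∧ x ≤ p}) ↔
      (∀ a b p : L, a ≤ b → a ≤ p → p ≤ b →
        p = b ⊓ sInf {y : L | y ⋖ b ∧ p ≤ y}) := by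
  constructor
  · exact aux_atomic_to_coatomic
  · intro hC a b p hab hap hpb
    have hA' : ∀ a b p : Lᵒᵈ, a ≤ b → a ≤ p → p ≤ b →
        p = a ⊔ sSup {x : Lᵒᵈ | a ⋖ x ∧ x ≤ p} := by
      intro a b p hab hap hpb
      have h := hC (OrderDual.ofDual b) (OrderDual.ofDual a) (OrderDual.ofDual p)
        hab hpb hap
      have hset : {x : Lᵒᵈ | a ⋖ x ∧ x ≤ p}
          = {x : Lᵒᵈ | OrderDual.ofDual x ⋖ OrderDual.ofDual a ∧ x ≤ p} := by
        ext x
        simp only [Set.mem_setOf_eq, ofDual_covBy_ofDual_iff]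
      rw [hset]
      exact h
    have h2 := aux_atomic_to_coatomic (L := Lᵒᵈ) hA'
      (OrderDual.toDual b) (OrderDual.toDual a) (OrderDual.toDual p) hab hpb hap
    have hset : {y : Lᵒᵈ | y ⋖ OrderDual.toDual a ∧ OrderDual.toDual p ≤ y}
        = {y : Lᵒᵈ | a ⋖ OrderDual.ofDual y ∧ OrderDual.toDual p ≤ y} := by
      ext y
      constructor
      · rintro ⟨h1, h2⟩
        exact ⟨ofDual_covBy_ofDual_iff.mpr h1, h2⟩
      · rintro ⟨h1, h2⟩
        exact ⟨ofDual_covBy_ofDual_iff.mp h1, h2⟩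
    rw [hset] at h2
    exact h2
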